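/- arXiv:math/0606442 — 2 statements merged into one kernel-verified Lean document; each statement's English description precedes it below -/
import Mathlib

section
/- Setup: fix finite sets B₁, C, H; for each b ∈ B₁ ∪ {∞} a nonempty finite set A_b with positive integers m_{b,a} (a ∈ A_b); for each c ∈ C a finite (possibly empty) set A'_c with positive integers m'_{c,a'} and a nonempty finite set A''_c with positive integers m''_{c,a''}. Let L be the free ℤ-module on I = (⊔_{b∈B₁∪{∞}} A_b) ⊔ (⊔_{c∈C} A'_c) ⊔ H, let L' be the free ℤ-module on I ⊔ (⊔_{c∈C} A''_c), and let j : L' → L be the projection forgetting the A''-coordinates. Define ℤ-linear maps f_* : L → ℤ^{B₁}, (f_*α)_b = ∑_{a∈A_b} m_{b,a}α_{b,a} − ∑_{a∈A_∞} m_{∞,a}α_{∞,a}, and f'_* : L' → ℤ^{B₁} ⊕ ℤ^{C}, whose B₁-components are given by the same formula and whose c-component is ∑_{a'∈A'_c} m'_{c,a'}β_{c,a'} + ∑_{a''∈A''_c} m''_{c,a''}β_{c,a''} − ∑_{a∈A_∞} m_{∞,a}β_{∞,a}. For c ∈ C set m''(c) = gcd_{a''∈A''_c} m''_{c,a''}, set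 G = ⊕_{c∈C} ℤ/m''(c)ℤ, and let θ : ker f_* → G send α to the element whose c-coordinate is the class of ∑_{a∈A_∞} m_{∞,a}α_{∞,a} − ∑_{a'∈A'_c} m'_{c,a'}α_{c,a'} modulo m''(c). Then: (1) j(ker f'_*) ⊆ ker f_*; (2) the kernel of θ is exactly j(ker f'_*); consequently θ induces a group isomorphism (ker f_*)/j(ker f'_*) ≅ θ(ker f_*) ⊆ G. -/
open Finset

section PencilModel

variable (B₁ C H : Type) [Fintype B₁] [Fintype C] [Fintype H]
  (A : Option B₁ → Type) [∀ b, Fintype (A b)]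
  (A' : C → Type) [∀ c, Fintype (A' c)]
  (A'' : C → Type) [∀ c, Fintype (A'' c)]
  (m : ∀ b, A b → ℕ) (m' : ∀ c, A' c → ℕ) (m'' : ∀ c, A'' c → ℕ)

/-- The index set of the basis of elementary loops of `L = H₁(M)`: loops around the
curves `C_{b,a}` (`b ∈ B₁ ∪ {∞}`, `a ∈ A_b`), the curves `C'_{c,a'}` (`c ∈ C`,
`a' ∈ A'_c`) and the horizontal components (indexed by `H`). -/
abbrev Idx := (Σ b : Option B₁, A b) ⊕ ((Σ c : C, A' c) ⊕ H)

/-- The index set of the basis of elementary loops of `L' = H₁(M')`: that of `L`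
together with loops around the extra deleted curves `C''_{c,a''}`. -/
abbrev Idx' := (Idx B₁ C H A A') ⊕ (Σ c : C, A'' c)

/-- The projection `j : L' → L` forgetting the `A''`-coordinates. -/
def jmap : ((Idx' B₁ C H A A' A'') → ℤ) →+ ((Idx B₁ C H A A') → ℤ) :=
  AddMonoidHom.mk' (fun β i => β (Sum.inl i)) (fun _ _ => rfl)

/-- The map `f_* : L → ℤ^{B₁}`,
`(f_* α)_b = ∑_{a ∈ A_b} m_{b,a} α_{b,a} − ∑_{a ∈ A_∞} m_{∞,a} α_{∞,a}`. -/
def fstar : ((Idx B₁ C H A A') → ℤ) →+ (B₁ → ℤ) :=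
  AddMonoidHom.mk'
    (fun α b =>
      (∑ a : A (some b), (m (some b) a : ℤ) * α (Sum.inl ⟨some b, a⟩)) -
      (∑ a : A none, (m none a : ℤ) * α (Sum.inl ⟨none, a⟩)))
    (by
      intro x y
      funext b
      simp only [Pi.add_apply, mul_add, Finset.sum_add_distrib]
      ring)

/-- The map `f'_* : L' → ℤ^{B₁} ⊕ ℤ^{C}`, with the same `B₁`-components as `f_*` and with
`c`-component `∑_{a'} m'_{c,a'} β_{c,a'} + ∑_{a''} m''_{c,a''} β_{c,a''}
− ∑_{a ∈ A_∞} m_{∞,a} β_{∞,a}`. -/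
def fstar' : ((Idx' B₁ C H A A' A'') → ℤ) →+ ((B₁ → ℤ) × (C → ℤ)) :=
  AddMonoidHom.mk'
    (fun β =>
      (fun b =>
        (∑ a : A (some b), (m (some b) a : ℤ) * β (Sum.inl (Sum.inl ⟨some b, a⟩))) -
        (∑ a : A none, (m none a : ℤ) * β (Sum.inl (Sum.inl ⟨none, a⟩))),
       fun c =>
        (∑ a' : A' c, (m' c a' : ℤ) * β (Sum.inl (Sum.inr (Sum.inl ⟨c, a'⟩)))) +
        (∑ a'' : A'' c, (m'' c a'' : ℤ) * β (Sum.inr ⟨c, a''⟩)) -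
        (∑ a : A none, (m none a : ℤ) * β (Sum.inl (Sum.inl ⟨none, a⟩)))))
    (by
      intro x y
      refine Prod.ext (funext fun b => ?_) (funext fun c => ?_) <;>
      · simp only [Prod.fst_add, Prod.snd_add, Pi.add_apply, mul_add, Finset.sum_add_distrib]
        ring)

/-- `m''(c)`, the gcd of the multiplicities `m''_{c,a''}` over `a'' ∈ A''_c`. -/
def gcd2 (c : C) : ℕ := Finset.univ.gcd (m'' c)

/-- The map `θ : ker f_* → G = ⊕_{c ∈ C} ℤ/m''(c)ℤ` sending `α` to the element whose
`c`-coordinate is the class of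
`∑_{a ∈ A_∞} m_{∞,a} α_{∞,a} − ∑_{a' ∈ A'_c} m'_{c,a'} α_{c,a'}` modulo `m''(c)`. -/
def theta : (fstar B₁ C H A A' m).ker →+ (∀ c : C, ZMod (gcd2 C A'' m'' c)) :=
  AddMonoidHom.mk'
    (fun α c =>
      ((((∑ a : A none, (m none a : ℤ) * (α : (Idx B₁ C H A A') → ℤ) (Sum.inl ⟨none, a⟩)) -
         (∑ a' : A' c, (m' c a' : ℤ) * (α : (Idx B₁ C H A A') → ℤ) (Sum.inr (Sum.inl ⟨c, a'⟩)))) : ℤ) :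
        ZMod (gcd2 C A'' m'' c)))
    (by
      intro x y
      funext c
      simp only [AddSubgroup.coe_add, Pi.add_apply, mul_add, Finset.sum_add_distrib]
      push_cast
      ring)

end PencilModel

lemma finset_gcd_bezout {ι : Type*} [DecidableEq ι] (s : Finset ι) (f : ι → ℕ) :
    ∃ x : ι → ℤ, ∑ i ∈ s, (f i : ℤ) * x i = ((s.gcd f : ℕ) : ℤ) := by
  induction s using Finset.induction_on with
  | empty => exact ⟨0, by simp⟩
  | @insert a s ha ih =>
    obtain ⟨x, hx⟩ := ih
    refine ⟨Function.update (fun i => x i * Nat.gcdB (f a) (s.gcd f)) a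
      (Nat.gcdA (f a) (s.gcd f)), ?_⟩
    rw [Finset.sum_insert ha, Function.update_self,
      Finset.sum_congr rfl (fun i hi => by
        rw [Function.update_of_ne (ne_of_mem_of_not_mem hi ha)]),
      Finset.gcd_insert]
    have hgcd : (Nat.gcd (f a) (s.gcd f) : ℤ)
        = (f a : ℤ) * Nat.gcdA (f a) (s.gcd f) + ((s.gcd f : ℕ) : ℤ) * Nat.gcdB (f a) (s.gcd f) :=
      Nat.gcd_eq_gcd_ab (f a) (s.gcd f)
    show _ = ((Nat.gcd (f a) (s.gcd f) : ℕ) : ℤ)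
    rw [hgcd, ← hx, Finset.sum_mul]
    congr 1
    exact Finset.sum_congr rfl fun i _ => (mul_assoc _ _ _).symm

/-- Theorem 6.1 of the paper, explicit model: `j(ker f'_*) ⊆ ker f_*`,
the kernel of `θ` is exactly `j(ker f'_*)`, and consequently `θ` induces an isomorphism
`(ker f_*)/j(ker f'_*) ≅ θ(ker f_*) ⊆ G = ⊕_{c ∈ C} ℤ/m''(c)ℤ`. -/
theorem stmt_11 (B₁ C H : Type) [Fintype B₁] [Fintype C] [Fintype H]
    (A : Option B₁ → Type) [∀ b, Fintype (A b)] [∀ b, Nonempty (A b)]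
    (A' : C → Type) [∀ c, Fintype (A' c)]
    (A'' : C → Type) [∀ c, Fintype (A'' c)] [∀ c, Nonempty (A'' c)]
    (m : ∀ b, A b → ℕ) (hm : ∀ b a, 0 < m b a)
    (m' : ∀ c, A' c → ℕ) (hm' : ∀ c a', 0 < m' c a')
    (m'' : ∀ c, A'' c → ℕ) (hm'' : ∀ c a'', 0 < m'' c a'') :
    ((fstar' B₁ C H A A' A'' m m' m'').ker.map (jmap B₁ C H A A' A'') ≤
      (fstar B₁ C H A A' m).ker) ∧
    ((theta B₁ C H A A' A'' m m' m'').ker =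
      ((fstar' B₁ C H A A' A'' m m' m'').ker.map
        (jmap B₁ C H A A' A'')).addSubgroupOf (fstar B₁ C H A A' m).ker) ∧
    Nonempty
      (((fstar B₁ C H A A' m).ker ⧸
          ((fstar' B₁ C H A A' A'' m m' m'').ker.map
            (jmap B₁ C H A A' A'')).addSubgroupOf (fstar B₁ C H A A' m).ker) ≃+
        (theta B₁ C H A A' A'' m m' m'').range) := by
  classical
  set F := fstar B₁ C H A A' m with hF
  set F' := fstar' B₁ C H A A' A'' m m' m'' with hF'
  set J := jmap B₁ C H A A' A'' with hJ
  set Θ := theta B₁ C H A A' A'' m m' m'' with hΘ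
  have h1 : (F'.ker.map J) ≤ F.ker := by
    rintro x ⟨β, hβ, rfl⟩
    have hβ' : F' β = 0 := hβ
    rw [AddMonoidHom.mem_ker]
    exact congrArg Prod.fst hβ'
  have h2 : Θ.ker = (F'.ker.map J).addSubgroupOf F.ker := by
    ext α
    rw [AddMonoidHom.mem_ker, AddSubgroup.mem_addSubgroupOf, AddSubgroup.mem_map]
    have hα : F (α : (Idx B₁ C H A A') → ℤ) = 0 := α.2
    constructor
    · intro hθ
      -- for each c, gcd divides S_c
      have hdvd : ∀ c : C, (gcd2 C A'' m'' c : ℤ) ∣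
          ((∑ a : A none, (m none a : ℤ) * (α : (Idx B₁ C H A A') → ℤ) (Sum.inl ⟨none, a⟩)) -
           (∑ a' : A' c, (m' c a' : ℤ) * (α : (Idx B₁ C H A A') → ℤ) (Sum.inr (Sum.inl ⟨c, a'⟩)))) := by
        intro c
        rw [← ZMod.intCast_zmod_eq_zero_iff_dvd]
        exact congrFun hθ c
      choose k hk using fun c => (hdvd c)
      choose x hx using fun c => finset_gcd_bezout (Finset.univ : Finset (A'' c)) (m'' c)
      refine ⟨Sum.elim (α : (Idx B₁ C H A A') → ℤ)
        (fun p => x p.1 p.2 * k p.1), ?_, by funext i; rfl⟩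
      rw [AddMonoidHom.mem_ker]
      refine Prod.ext (funext fun b => ?_) (funext fun c => ?_)
      · exact congrFun hα b
      · show (∑ a' : A' c, (m' c a' : ℤ) * (α : (Idx B₁ C H A A') → ℤ) (Sum.inr (Sum.inl ⟨c, a'⟩))) +
          (∑ a'' : A'' c, (m'' c a'' : ℤ) * (x c a'' * k c)) -
          (∑ a : A none, (m none a : ℤ) * (α : (Idx B₁ C H A A') → ℤ) (Sum.inl ⟨none, a⟩)) = 0
        have hsum : (∑ a'' : A'' c, (m'' c a'' : ℤ) * (x c a'' * k c))
            = (gcd2 C A'' m'' c : ℤ) * k c := by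
          simp only [gcd2]
          rw [← hx c, Finset.sum_mul]
          exact Finset.sum_congr rfl fun i _ => (mul_assoc _ _ _).symm
        rw [hsum, ← hk c]
        ring
    · rintro ⟨β, hβ, hJβ⟩
      rw [AddMonoidHom.mem_ker] at hβ
      have hβval : ∀ i, β (Sum.inl i) = (α : (Idx B₁ C H A A') → ℤ) i :=
        fun i => congrFun hJβ i
      funext c
      have hc : (∑ a' : A' c, (m' c a' : ℤ) * β (Sum.inl (Sum.inr (Sum.inl ⟨c, a'⟩)))) +
          (∑ a'' : A'' c, (m'' c a'' : ℤ) * β (Sum.inr ⟨c, a''⟩)) -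
          (∑ a : A none, (m none a : ℤ) * β (Sum.inl (Sum.inl ⟨none, a⟩))) = 0 :=
        congrFun (congrArg Prod.snd hβ) c
      have hdvd : (gcd2 C A'' m'' c : ℤ) ∣
          (∑ a'' : A'' c, (m'' c a'' : ℤ) * β (Sum.inr ⟨c, a''⟩)) :=
        Finset.dvd_sum fun a'' _ =>
          Dvd.dvd.mul_right (Int.natCast_dvd_natCast.mpr (Finset.gcd_dvd (Finset.mem_univ a''))) _
      show ((((∑ a : A none, (m none a : ℤ) * (α : (Idx B₁ C H A A') → ℤ) (Sum.inl ⟨none, a⟩)) -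
         (∑ a' : A' c, (m' c a' : ℤ) * (α : (Idx B₁ C H A A') → ℤ) (Sum.inr (Sum.inl ⟨c, a'⟩)))) : ℤ) :
        ZMod (gcd2 C A'' m'' c)) = 0
      rw [ZMod.intCast_zmod_eq_zero_iff_dvd]
      have heq : (∑ a : A none, (m none a : ℤ) * (α : (Idx B₁ C H A A') → ℤ) (Sum.inl ⟨none, a⟩)) -
          (∑ a' : A' c, (m' c a' : ℤ) * (α : (Idx B₁ C H A A') → ℤ) (Sum.inr (Sum.inl ⟨c, a'⟩)))
          = ∑ a'' : A'' c, (m'' c a'' : ℤ) * β (Sum.inr ⟨c, a''⟩) := by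
        simp only [← hβval]
        linarith [hc]
      rw [heq]
      exact hdvd
  refine ⟨h1, h2, ?_⟩
  rw [← h2]
  exact ⟨QuotientAddGroup.quotientKerEquivRange Θ⟩
end

section
/- Setup: fix finite sets B₁, C, H; for each b ∈ B₁ ∪ {∞} a nonempty finite set A_b with positive integers m_{b,a}; for each c ∈ C a finite (possibly empty) set A'_c with positive integers m'_{c,a'} and a nonempty finite set A''_c with positive integers m''_{c,a''}. Let L be the free ℤ-module on I = (⊔_{b∈B₁∪{∞}} A_b) ⊔ (⊔_{c∈C} A'_c) ⊔ H, let L' be the free ℤ-module on I ⊔ (⊔_{c∈C} A''_c), and let j : L' → L be the projection forgetting the A''-coordinates. Define f_* : L → ℤ^{B₁} and f'_* : L' → ℤ^{B₁} ⊕ ℤ^{C} by (f_*α)_b = ∑_{a∈A_b} m_{b,a}α_{b,a} − ∑_{a∈A_∞} m_{∞,a}α_{∞,a}, with f'_* given by the same B₁-formula together with c-components ∑_{a'} m'_{c,a'}β_{c,a'} + ∑_{a''} m''_{c,a''}β_{c,a''} − ∑_{a∈A_∞} m_{∞,a}β_{∞,a}. Then the quotient group T = (ker f_*)/j(ker f'_*)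 is a finite abelian group, and its order divides ∏_{c∈C} m''(c), where m''(c) = gcd_{a''∈A''_c} m''_{c,a''}. -/
open Finset

/-- Bézout's identity for a finite family of natural numbers. -/
lemma bezout_finset {ι : Type} [DecidableEq ι] (s : Finset ι) (f : ι → ℕ) :
    ∃ g : ι → ℤ, ∑ i ∈ s, (f i : ℤ) * g i = ((s.gcd f : ℕ) : ℤ) := by
  induction s using Finset.induction_on with
  | empty => exact ⟨0, by simp⟩
  | @insert a s ha ih =>
    obtain ⟨g, hg⟩ := ih
    refine ⟨fun i => if i = a then Nat.gcdA (f a) (s.gcd f)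
      else Nat.gcdB (f a) (s.gcd f) * g i, ?_⟩
    rw [Finset.sum_insert ha]
    have h1 : ∑ i ∈ s, (f i : ℤ) *
        (if i = a then Nat.gcdA (f a) (s.gcd f) else Nat.gcdB (f a) (s.gcd f) * g i)
        = Nat.gcdB (f a) (s.gcd f) * ∑ i ∈ s, (f i : ℤ) * g i := by
      rw [Finset.mul_sum]
      refine Finset.sum_congr rfl fun i hi => ?_
      rw [if_neg (by rintro rfl; exact ha hi)]
      ring
    have h2 : (f a : ℤ) * (if a = a then Nat.gcdA (f a) (s.gcd f)
        else Nat.gcdB (f a) (s.gcd f) * g a) = (f a : ℤ) * Nat.gcdA (f a) (s.gcd f) := by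
      rw [if_pos rfl]
    have h3 : (insert a s).gcd f = Nat.gcd (f a) (s.gcd f) := Finset.gcd_insert
    rw [h1, hg, h2, h3, Nat.gcd_eq_gcd_ab (f a) (s.gcd f)]
    ring

/-- the quotient group `T = (ker f_*)/j(ker f'_*)` is a finite abelian
group whose order divides `∏_{c ∈ C} m''(c)`. -/
theorem stmt_12 (B₁ C H : Type) [Fintype B₁] [Fintype C] [Fintype H]
    (A : Option B₁ → Type) [∀ b, Fintype (A b)] [∀ b, Nonempty (A b)]
    (A' : C → Type) [∀ c, Fintype (A' c)]
    (A'' : C → Type) [∀ c, Fintype (A'' c)] [∀ c, Nonempty (A'' c)]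
    (m : ∀ b, A b → ℕ) (hm : ∀ b a, 0 < m b a)
    (m' : ∀ c, A' c → ℕ) (hm' : ∀ c a', 0 < m' c a')
    (m'' : ∀ c, A'' c → ℕ) (hm'' : ∀ c a'', 0 < m'' c a'') :
    Finite
      ((fstar B₁ C H A A' m).ker ⧸
        ((fstar' B₁ C H A A' A'' m m' m'').ker.map
          (jmap B₁ C H A A' A'')).addSubgroupOf (fstar B₁ C H A A' m).ker) ∧
    Nat.card
      ((fstar B₁ C H A A' m).ker ⧸
        ((fstar' B₁ C H A A' A'' m m' m'').ker.map
          (jmap B₁ C H A A' A'')).addSubgroupOf (fstar B₁ C H A A' m).ker) ∣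
      ∏ c : C, gcd2 C A'' m'' c := by
  classical
  set θ := theta B₁ C H A A' A'' m m' m'' with hθ
  -- the subgroup in question is exactly the kernel of θ
  have hker : ((fstar' B₁ C H A A' A'' m m' m'').ker.map
      (jmap B₁ C H A A' A'')).addSubgroupOf (fstar B₁ C H A A' m).ker = θ.ker := by
    ext α
    simp only [AddSubgroup.mem_addSubgroupOf, AddSubgroup.mem_map, AddMonoidHom.mem_ker]
    constructor
    · rintro ⟨β, hβ, hβα⟩
      funext c
      have hc := congrFun (congrArg Prod.snd hβ) c
      simp only [fstar', AddMonoidHom.mk'_apply, Pi.zero_apply, Prod.snd_zero] at hc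
      have hdvd : (gcd2 C A'' m'' c : ℤ) ∣
          ∑ a'' : A'' c, (m'' c a'' : ℤ) * β (Sum.inr ⟨c, a''⟩) := by
        refine Finset.dvd_sum fun a _ => Dvd.dvd.mul_right ?_ _
        exact_mod_cast Finset.gcd_dvd (Finset.mem_univ a)
      have hβα' : ∀ i, β (Sum.inl i) = (α : (Idx B₁ C H A A') → ℤ) i := fun i =>
        congrFun hβα i
      simp only [hθ, theta, AddMonoidHom.mk'_apply, Pi.zero_apply]
      rw [ZMod.intCast_zmod_eq_zero_iff_dvd]
      have key : (∑ a : A none, (m none a : ℤ) * (α : (Idx B₁ C H A A') → ℤ) (Sum.inl ⟨none, a⟩)) -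
          (∑ a' : A' c, (m' c a' : ℤ) * (α : (Idx B₁ C H A A') → ℤ) (Sum.inr (Sum.inl ⟨c, a'⟩)))
          = ∑ a'' : A'' c, (m'' c a'' : ℤ) * β (Sum.inr ⟨c, a''⟩) := by
        simp only [← hβα']
        linarith [hc]
      rw [key]
      exact hdvd
    · intro h
      -- Bézout coefficients for each c
      choose g hg using fun c => bezout_finset (Finset.univ : Finset (A'' c)) (m'' c)
      have hd : ∀ c, (gcd2 C A'' m'' c : ℤ) ∣
          (∑ a : A none, (m none a : ℤ) * (α : (Idx B₁ C H A A') → ℤ) (Sum.inl ⟨none, a⟩)) -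
          (∑ a' : A' c, (m' c a' : ℤ) *
            (α : (Idx B₁ C H A A') → ℤ) (Sum.inr (Sum.inl ⟨c, a'⟩))) := by
        intro c
        have hc := congrFun h c
        simp only [hθ, theta, AddMonoidHom.mk'_apply, Pi.zero_apply] at hc
        exact (ZMod.intCast_zmod_eq_zero_iff_dvd _ _).mp hc
      choose k hk using hd
      simp only [gcd2] at hk
      refine ⟨Sum.elim (α : (Idx B₁ C H A A') → ℤ) (fun p => g p.1 p.2 * k p.1), ?_, ?_⟩
      · have hα := α.2
        simp only [AddMonoidHom.mem_ker, fstar, AddMonoidHom.mk'_apply] at hα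
        refine Prod.ext (funext fun b => ?_) (funext fun c => ?_)
        · have := congrFun hα b
          simpa only [fstar', AddMonoidHom.mk'_apply, Sum.elim_inl, Pi.zero_apply,
            Prod.fst_zero] using this
        · simp only [fstar', AddMonoidHom.mk'_apply, Sum.elim_inl, Sum.elim_inr,
            Pi.zero_apply, Prod.snd_zero]
          have h2 : ∑ a'' : A'' c, (m'' c a'' : ℤ) * (g c a'' * k c)
              = (∑ a'' : A'' c, (m'' c a'' : ℤ) * g c a'') * k c := by
            rw [Finset.sum_mul]; exact Finset.sum_congr rfl fun a _ => by ring
          rw [h2, hg c, ← hk c]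
          ring
      · funext i
        rfl
  rw [hker]
  -- each gcd2 is nonzero
  have hpos : ∀ c : C, gcd2 C A'' m'' c ≠ 0 := by
    intro c hc
    obtain ⟨a⟩ := ‹∀ c, Nonempty (A'' c)› c
    exact (hm'' c a).ne' (Finset.gcd_eq_zero_iff.mp hc a (Finset.mem_univ a))
  haveI : ∀ c : C, NeZero (gcd2 C A'' m'' c) := fun c => ⟨hpos c⟩
  haveI : Finite (∀ c : C, ZMod (gcd2 C A'' m'' c)) := by
    haveI : ∀ c : C, Finite (ZMod (gcd2 C A'' m'' c)) := fun c => by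
      haveI := ZMod.fintype (gcd2 C A'' m'' c)
      infer_instance
    infer_instance
  have hinj := QuotientAddGroup.kerLift_injective θ
  constructor
  · exact Finite.of_injective _ hinj
  · have hdvd := AddSubgroup.card_dvd_of_injective (QuotientAddGroup.kerLift θ) hinj
    have hcard : Nat.card (∀ c : C, ZMod (gcd2 C A'' m'' c)) = ∏ c : C, gcd2 C A'' m'' c := by
      rw [Nat.card_pi]
      exact Finset.prod_congr rfl fun c _ => Nat.card_zmod _
    rwa [hcard] at hdvd
end
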